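/- Let L_0 and L_1 be disjoint finite relational languages and K_0, K_1 be Fraïssé classes of finite L_0- and L_1-structures respectively. If K_0 and K_1 both have the strong amalgamation property, then the sum K_0 ⊕ K_1 is a Fraïssé class (i.e., it has the hereditary property, the joint embedding property and the amalgamation property) and moreover has the strong amalgamation property. -/

import Mathlib

open FirstOrder FirstOrder.Language

universe u v w

namespace NATPPaper

variable {L : FirstOrder.Language.{u, v}}

/-- A class `K` of structures has the strong amalgamation property (SAP): amalgamation where the
images of the two structures intersect exactly in the image of the common substructure, together
with the disjoint joint embedding property (the case `A = ∅`). -/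
def IsSAP (K : Set (CategoryTheory.Bundled.{w} L.Structure)) : Prop :=
  (∀ A B C : CategoryTheory.Bundled.{w} L.Structure, A ∈ K → B ∈ K → C ∈ K →
      ∀ (e : A ↪[L] B) (f : A ↪[L] C),
        ∃ (D : CategoryTheory.Bundled.{w} L.Structure) (_ : D ∈ K)
          (g : B ↪[L] D) (h : C ↪[L] D),
            g.comp e = h.comp f ∧
            Set.range ⇑g ∩ Set.range ⇑h = Set.range ⇑(g.comp e)) ∧
  (∀ B C : CategoryTheory.Bundled.{w} L.Structure, B ∈ K → C ∈ K →
      ∃ (D : CategoryTheory.Bundled.{w} L.Structure) (_ : D ∈ K)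
        (g : B ↪[L] D) (h : C ↪[L] D),
          Set.range ⇑g ∩ Set.range ⇑h = ∅)

variable {L₁ : FirstOrder.Language.{u, v}} {L₂ : FirstOrder.Language.{u, v}}

/-- The sum `K₀ ⊕ K₁` of a class of finite `L₁`-structures and a class of finite
`L₂`-structures: the class of `(L₁ ∪ L₂)`-structures whose `L₁`-reduct lies in `K₀` and whose
`L₂`-reduct lies in `K₁`. -/
def sumClass (K₀ : Set (CategoryTheory.Bundled.{w} L₁.Structure))
    (K₁ : Set (CategoryTheory.Bundled.{w} L₂.Structure)) :
    Set (CategoryTheory.Bundled.{w} (L₁.sum L₂).Structure) :=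
  {M | (⟨M, (LHom.sumInl : L₁ →ᴸ L₁.sum L₂).reduct M⟩ : CategoryTheory.Bundled L₁.Structure) ∈ K₀
     ∧ (⟨M, (LHom.sumInr : L₂ →ᴸ L₁.sum L₂).reduct M⟩ : CategoryTheory.Bundled L₂.Structure) ∈ K₁}

/-- Reducing an `(L₁.sum L₂)`-embedding to an `L₁`-embedding of the reducts. -/
def redEmb₁ {M N : Type w} [sM : (L₁.sum L₂).Structure M] [sN : (L₁.sum L₂).Structure N]
    (f : M ↪[L₁.sum L₂] N) :
    @Embedding L₁ M N (@LHom.reduct L₁ (L₁.sum L₂) LHom.sumInl M sM)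
      (@LHom.reduct L₁ (L₁.sum L₂) LHom.sumInl N sN) :=
  @Embedding.mk L₁ M N (@LHom.reduct L₁ (L₁.sum L₂) LHom.sumInl M sM)
      (@LHom.reduct L₁ (L₁.sum L₂) LHom.sumInl N sN) f.toEmbedding
      (fun {_} F x => f.map_fun' (Sum.inl F) x)
      (fun {_} r x => f.map_rel' (Sum.inl r) x)

/-- Reducing an `(L₁.sum L₂)`-embedding to an `L₂`-embedding of the reducts. -/
def redEmb₂ {M N : Type w} [sM : (L₁.sum L₂).Structure M] [sN : (L₁.sum L₂).Structure N]
    (f : M ↪[L₁.sum L₂] N) :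
    @Embedding L₂ M N (@LHom.reduct L₂ (L₁.sum L₂) LHom.sumInr M sM)
      (@LHom.reduct L₂ (L₁.sum L₂) LHom.sumInr N sN) :=
  @Embedding.mk L₂ M N (@LHom.reduct L₂ (L₁.sum L₂) LHom.sumInr M sM)
      (@LHom.reduct L₂ (L₁.sum L₂) LHom.sumInr N sN) f.toEmbedding
      (fun {_} F x => f.map_fun' (Sum.inr F) x)
      (fun {_} r x => f.map_rel' (Sum.inr r) x)

@[simp] lemma redEmb₁_apply {M N : Type w} [(L₁.sum L₂).Structure M] [(L₁.sum L₂).Structure N]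
    (f : M ↪[L₁.sum L₂] N) (x : M) : redEmb₁ f x = f x := rfl

@[simp] lemma redEmb₂_apply {M N : Type w} [(L₁.sum L₂).Structure M] [(L₁.sum L₂).Structure N]
    (f : M ↪[L₁.sum L₂] N) (x : M) : redEmb₂ f x = f x := rfl

/-- Transport a structure in a hereditary, isomorphism-invariant class along an injection from a
finite type. -/
lemma exists_structure_of_embedding {L : FirstOrder.Language.{u, v}} [L.IsRelational]
    {K : Set (CategoryTheory.Bundled.{w} L.Structure)}
    (hHer : Hereditary K)
    (hIso : ∀ M N : CategoryTheory.Bundled.{w} L.Structure,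
      Nonempty (M ≃[L] N) → (M ∈ K ↔ N ∈ K))
    (D : CategoryTheory.Bundled.{w} L.Structure) (hD : D ∈ K)
    (X : Type w) [Finite X] (j : X → D) (hj : Function.Injective j) :
    ∃ s : L.Structure X, (⟨X, s⟩ : CategoryTheory.Bundled L.Structure) ∈ K ∧
      ∀ {n : ℕ} (r : L.Relations n) (x : Fin n → X),
        @Structure.RelMap L X s n r x ↔ Structure.RelMap r (j ∘ x) := by
  classical
  set T : L.Substructure D := Substructure.closure L (Set.range j) with hTdef
  have hT : (T : Set D) = Set.range j := Substructure.closure_eq_of_isRelational L _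
  have hmem : ∀ x, j x ∈ T := fun x => by
    rw [← SetLike.mem_coe, hT]; exact Set.mem_range_self x
  let E : X ≃ T := Equiv.ofBijective (fun x => ⟨j x, hmem x⟩)
    ⟨fun a b hab => hj (congrArg Subtype.val hab), fun t => by
      have ht : (t : D) ∈ Set.range j := by rw [← hT]; exact t.2
      obtain ⟨x, hx⟩ := ht
      exact ⟨x, Subtype.ext hx⟩⟩
  haveI : Finite T := by
    have : (T : Set D).Finite := by rw [hT]; exact Set.finite_range j
    exact this.to_subtype
  refine ⟨E.symm.inducedStructure, ?_, ?_⟩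
  · refine (hIso ⟨T, inferInstance⟩ _ ⟨Equiv.inducedStructureEquiv E.symm⟩).1 ?_
    exact hHer D hD ⟨Structure.FG.of_finite, ⟨T.subtype⟩⟩
  · intro n r x
    exact Iff.rfl

/-- The key amalgam-building lemma: given compatible amalgams in each of the two languages with a
common underlying set `X`, produce an amalgam in the sum language. -/
lemma key {K₀ : Set (CategoryTheory.Bundled.{w} L₁.Structure)}
    {K₁ : Set (CategoryTheory.Bundled.{w} L₂.Structure)}
    [L₁.IsRelational] [L₂.IsRelational]
    (her₀ : Hereditary K₀)
    (iso₀ : ∀ M N : CategoryTheory.Bundled.{w} L₁.Structure,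
      Nonempty (M ≃[L₁] N) → (M ∈ K₀ ↔ N ∈ K₀))
    (her₁ : Hereditary K₁)
    (iso₁ : ∀ M N : CategoryTheory.Bundled.{w} L₂.Structure,
      Nonempty (M ≃[L₂] N) → (M ∈ K₁ ↔ N ∈ K₁))
    (B C : CategoryTheory.Bundled.{w} (L₁.sum L₂).Structure)
    (X : Type w) [Finite X] (u : B → X) (v : C → X)
    (D₀ : CategoryTheory.Bundled.{w} L₁.Structure) (hD₀ : D₀ ∈ K₀)
    (g₀ : (⟨B, (LHom.sumInl : L₁ →ᴸ L₁.sum L₂).reduct B⟩ :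
        CategoryTheory.Bundled L₁.Structure) ↪[L₁] D₀)
    (h₀ : (⟨C, (LHom.sumInl : L₁ →ᴸ L₁.sum L₂).reduct C⟩ :
        CategoryTheory.Bundled L₁.Structure) ↪[L₁] D₀)
    (j₀ : X → D₀) (hj₀ : Function.Injective j₀)
    (hu₀ : ∀ b, j₀ (u b) = g₀ b) (hv₀ : ∀ c, j₀ (v c) = h₀ c)
    (D₁ : CategoryTheory.Bundled.{w} L₂.Structure) (hD₁ : D₁ ∈ K₁)
    (g₁ : (⟨B, (LHom.sumInr : L₂ →ᴸ L₁.sum L₂).reduct B⟩ :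
        CategoryTheory.Bundled L₂.Structure) ↪[L₂] D₁)
    (h₁ : (⟨C, (LHom.sumInr : L₂ →ᴸ L₁.sum L₂).reduct C⟩ :
        CategoryTheory.Bundled L₂.Structure) ↪[L₂] D₁)
    (j₁ : X → D₁) (hj₁ : Function.Injective j₁)
    (hu₁ : ∀ b, j₁ (u b) = g₁ b) (hv₁ : ∀ c, j₁ (v c) = h₁ c) :
    ∃ (D : CategoryTheory.Bundled.{w} (L₁.sum L₂).Structure) (_ : D ∈ sumClass K₀ K₁)
      (g : B ↪[L₁.sum L₂] D) (h : C ↪[L₁.sum L₂] D),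
      ∀ (b : B) (c : C), g b = h c ↔ u b = v c := by
  obtain ⟨s₁, hs₁K, hs₁rel⟩ := exists_structure_of_embedding her₀ iso₀ D₀ hD₀ X j₀ hj₀
  obtain ⟨s₂, hs₂K, hs₂rel⟩ := exists_structure_of_embedding her₁ iso₁ D₁ hD₁ X j₁ hj₁
  letI := s₁
  letI := s₂
  have uinj : Function.Injective u := fun a b hab =>
    g₀.injective ((hu₀ a).symm.trans (by rw [hab, hu₀ b]))
  have vinj : Function.Injective v := fun a b hab =>
    h₀.injective ((hv₀ a).symm.trans (by rw [hab, hv₀ b]))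
  refine ⟨⟨X, inferInstance⟩, ⟨hs₁K, hs₂K⟩, ?_⟩
  let g : B ↪[L₁.sum L₂] (⟨X, inferInstance⟩ :
      CategoryTheory.Bundled (L₁.sum L₂).Structure) :=
    { toFun := u
      inj' := uinj
      map_fun' := fun {_} F _ => isEmptyElim F
      map_rel' := fun {n} r x => by
        cases r with
        | inl r =>
          refine (hs₁rel r (u ∘ x)).trans ?_
          have h2 : j₀ ∘ (u ∘ x) = ⇑g₀ ∘ x := funext fun i => hu₀ (x i)
          rw [show Structure.RelMap (L := L₁.sum L₂) (Sum.inl r) x =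
            Structure.RelMap (M := (⟨B, (LHom.sumInl : L₁ →ᴸ L₁.sum L₂).reduct B⟩ :
              CategoryTheory.Bundled L₁.Structure)) r x from rfl]
          rw [h2]
          exact g₀.map_rel' r x
        | inr r =>
          refine (hs₂rel r (u ∘ x)).trans ?_
          have h2 : j₁ ∘ (u ∘ x) = ⇑g₁ ∘ x := funext fun i => hu₁ (x i)
          rw [h2]
          exact g₁.map_rel' r x }
  let h : C ↪[L₁.sum L₂] (⟨X, inferInstance⟩ :
      CategoryTheory.Bundled (L₁.sum L₂).Structure) :=
    { toFun := v
      inj' := vinj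
      map_fun' := fun {_} F _ => isEmptyElim F
      map_rel' := fun {n} r x => by
        cases r with
        | inl r =>
          refine (hs₁rel r (v ∘ x)).trans ?_
          have h2 : j₀ ∘ (v ∘ x) = ⇑h₀ ∘ x := funext fun i => hv₀ (x i)
          rw [h2]
          exact h₀.map_rel' r x
        | inr r =>
          refine (hs₂rel r (v ∘ x)).trans ?_
          have h2 : j₁ ∘ (v ∘ x) = ⇑h₁ ∘ x := funext fun i => hv₁ (x i)
          rw [h2]
          exact h₁.map_rel' r x }
  exact ⟨g, h, fun b c => Iff.rfl⟩

/-- **Remark 3.14**: If `K₀` and `K₁` are Fraïssé classes of finite structures in disjoint finite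
relational languages, both with the strong amalgamation property, then the sum `K₀ ⊕ K₁` is a
Fraïssé class (it has the hereditary property, the joint embedding property and the amalgamation
property) and moreover has the strong amalgamation property. -/
theorem sumClass_isFraisse_and_SAP
    [L₁.IsRelational] [L₂.IsRelational]
    [Finite (Σ n, L₁.Relations n)] [Finite (Σ n, L₂.Relations n)]
    (K₀ : Set (CategoryTheory.Bundled.{w} L₁.Structure))
    (K₁ : Set (CategoryTheory.Bundled.{w} L₂.Structure))
    (hK₀ : IsFraisse K₀) (hK₁ : IsFraisse K₁)
    (hfin₀ : ∀ M ∈ K₀, Finite M) (hfin₁ : ∀ M ∈ K₁, Finite M)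
    (hSAP₀ : IsSAP K₀) (hSAP₁ : IsSAP K₁) :
    (Hereditary (sumClass K₀ K₁) ∧ JointEmbedding (sumClass K₀ K₁) ∧
      Amalgamation (sumClass K₀ K₁)) ∧ IsSAP (sumClass K₀ K₁) := by
  classical
  have sap : IsSAP (sumClass K₀ K₁) := by
    constructor
    · -- strong amalgamation
      rintro A B C hA hB hC e f
      obtain ⟨D₀, hD₀, g₀, h₀, hc₀, hi₀⟩ :=
        hSAP₀.1 _ _ _ hA.1 hB.1 hC.1 (redEmb₁ e) (redEmb₁ f)
      obtain ⟨D₁, hD₁, g₁, h₁, hc₁, hi₁⟩ :=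
        hSAP₁.1 _ _ _ hA.2 hB.2 hC.2 (redEmb₂ e) (redEmb₂ f)
      haveI : Finite B := hfin₀ _ hB.1
      haveI : Finite C := hfin₀ _ hC.1
      have hcc₀ : ∀ a : A, g₀ (e a) = h₀ (f a) := fun a => by
        have h := congr_fun (congr_arg (DFunLike.coe) hc₀) a
        simpa using h
      have hcc₁ : ∀ a : A, g₁ (e a) = h₁ (f a) := fun a => by
        have h := congr_fun (congr_arg (DFunLike.coe) hc₁) a
        simpa using h
      let X : Type w := ↥B ⊕ {c : C // c ∉ Set.range ⇑f}
      let u : B → X := Sum.inl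
      let v : C → X := fun c =>
        if hc : c ∈ Set.range ⇑f then Sum.inl (e hc.choose) else Sum.inr ⟨c, hc⟩
      have hv_mem : ∀ a : A, v (f a) = Sum.inl (e a) := by
        intro a
        have hc : f a ∈ Set.range ⇑f := ⟨a, rfl⟩
        simp only [v, dif_pos hc]
        exact congrArg Sum.inl (congrArg e (f.injective hc.choose_spec))
      have hv_not : ∀ c (hc : c ∉ Set.range ⇑f), v c = Sum.inr ⟨c, hc⟩ := by
        intro c hc
        simp only [v, dif_neg hc]
      -- j₀
      let j₀ : X → D₀ := Sum.elim ⇑g₀ (fun c => h₀ c.1)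
      have hcross₀ : ∀ (b : B) (c : {c : C // c ∉ Set.range ⇑f}), g₀ b ≠ h₀ c.1 := by
        rintro b c hbc
        have hmem : g₀ b ∈ Set.range ⇑g₀ ∩ Set.range ⇑h₀ := ⟨⟨b, rfl⟩, ⟨c.1, hbc.symm⟩⟩
        rw [hi₀] at hmem
        obtain ⟨a, ha⟩ := hmem
        have ha' : g₀ (e a) = g₀ b := by simpa using ha
        have : h₀ c.1 = h₀ (f a) := by rw [← hbc, ← ha', hcc₀]
        exact c.2 ⟨a, (h₀.injective this).symm⟩
      have hj₀ : Function.Injective j₀ := by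
        rintro (b | c) (b' | c') hxy
        · exact congrArg Sum.inl (g₀.injective hxy)
        · exact absurd hxy (hcross₀ b c')
        · exact absurd hxy.symm (hcross₀ b' c)
        · exact congrArg Sum.inr (Subtype.ext (h₀.injective hxy))
      have hu₀ : ∀ b, j₀ (u b) = g₀ b := fun b => rfl
      have hv₀ : ∀ c, j₀ (v c) = h₀ c := by
        intro c
        by_cases hc : c ∈ Set.range ⇑f
        · obtain ⟨a, rfl⟩ := hc
          rw [hv_mem a]
          exact (hcc₀ a).trans rfl
        · rw [hv_not c hc]; rfl
      -- j₁
      let j₁ : X → D₁ := Sum.elim ⇑g₁ (fun c => h₁ c.1)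
      have hcross₁ : ∀ (b : B) (c : {c : C // c ∉ Set.range ⇑f}), g₁ b ≠ h₁ c.1 := by
        rintro b c hbc
        have hmem : g₁ b ∈ Set.range ⇑g₁ ∩ Set.range ⇑h₁ := ⟨⟨b, rfl⟩, ⟨c.1, hbc.symm⟩⟩
        rw [hi₁] at hmem
        obtain ⟨a, ha⟩ := hmem
        have ha' : g₁ (e a) = g₁ b := by simpa using ha
        have : h₁ c.1 = h₁ (f a) := by rw [← hbc, ← ha', hcc₁]
        exact c.2 ⟨a, (h₁.injective this).symm⟩
      have hj₁ : Function.Injective j₁ := by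
        rintro (b | c) (b' | c') hxy
        · exact congrArg Sum.inl (g₁.injective hxy)
        · exact absurd hxy (hcross₁ b c')
        · exact absurd hxy.symm (hcross₁ b' c)
        · exact congrArg Sum.inr (Subtype.ext (h₁.injective hxy))
      have hu₁ : ∀ b, j₁ (u b) = g₁ b := fun b => rfl
      have hv₁ : ∀ c, j₁ (v c) = h₁ c := by
        intro c
        by_cases hc : c ∈ Set.range ⇑f
        · obtain ⟨a, rfl⟩ := hc
          rw [hv_mem a]
          exact (hcc₁ a).trans rfl
        · rw [hv_not c hc]; rfl
      obtain ⟨D, hD, g, h, hiff⟩ :=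
        key hK₀.hereditary (fun _ _ => hK₀.is_equiv_invariant) hK₁.hereditary (fun _ _ => hK₁.is_equiv_invariant)
          B C X u v D₀ hD₀ g₀ h₀ j₀ hj₀ hu₀ hv₀ D₁ hD₁ g₁ h₁ j₁ hj₁ hu₁ hv₁
      have hge : ∀ a : A, g (e a) = h (f a) := fun a =>
        (hiff (e a) (f a)).2 (by rw [hv_mem a])
      refine ⟨D, hD, g, h, ?_, ?_⟩
      · ext a
        simp only [Embedding.comp_apply]
        exact hge a
      · ext x
        constructor
        · rintro ⟨⟨b, rfl⟩, ⟨c, hc⟩⟩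
          have huv : u b = v c := (hiff b c).1 hc.symm
          by_cases hcf : c ∈ Set.range ⇑f
          · obtain ⟨a, rfl⟩ := hcf
            rw [hv_mem a] at huv
            have hb : b = e a := Sum.inl.inj huv
            exact ⟨a, by simp [Embedding.comp_apply, ← hb]⟩
          · rw [hv_not c hcf] at huv
            exact absurd huv (by simp [u])
        · rintro ⟨a, rfl⟩
          refine ⟨⟨e a, by simp [Embedding.comp_apply]⟩,
            ⟨f a, by simp [Embedding.comp_apply, (hge a).symm]⟩⟩
    · -- disjoint JEP
      rintro B C hB hC
      obtain ⟨D₀, hD₀, g₀, h₀, hd₀⟩ := hSAP₀.2 _ _ hB.1 hC.1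
      obtain ⟨D₁, hD₁, g₁, h₁, hd₁⟩ := hSAP₁.2 _ _ hB.2 hC.2
      haveI : Finite B := hfin₀ _ hB.1
      haveI : Finite C := hfin₀ _ hC.1
      let X : Type w := ↥B ⊕ ↥C
      let u : B → X := Sum.inl
      let v : C → X := Sum.inr
      have hcross₀ : ∀ (b : B) (c : C), g₀ b ≠ h₀ c := by
        rintro b c hbc
        exact Set.eq_empty_iff_forall_notMem.mp hd₀ (g₀ b) ⟨⟨b, rfl⟩, ⟨c, hbc.symm⟩⟩
      have hcross₁ : ∀ (b : B) (c : C), g₁ b ≠ h₁ c := by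
        rintro b c hbc
        exact Set.eq_empty_iff_forall_notMem.mp hd₁ (g₁ b) ⟨⟨b, rfl⟩, ⟨c, hbc.symm⟩⟩
      let j₀ : X → D₀ := Sum.elim ⇑g₀ ⇑h₀
      have hj₀ : Function.Injective j₀ := by
        rintro (b | c) (b' | c') hxy
        · exact congrArg Sum.inl (g₀.injective hxy)
        · exact absurd hxy (hcross₀ b c')
        · exact absurd hxy.symm (hcross₀ b' c)
        · exact congrArg Sum.inr (h₀.injective hxy)
      let j₁ : X → D₁ := Sum.elim ⇑g₁ ⇑h₁
      have hj₁ : Function.Injective j₁ := by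
        rintro (b | c) (b' | c') hxy
        · exact congrArg Sum.inl (g₁.injective hxy)
        · exact absurd hxy (hcross₁ b c')
        · exact absurd hxy.symm (hcross₁ b' c)
        · exact congrArg Sum.inr (h₁.injective hxy)
      obtain ⟨D, hD, g, h, hiff⟩ :=
        key hK₀.hereditary (fun _ _ => hK₀.is_equiv_invariant) hK₁.hereditary (fun _ _ => hK₁.is_equiv_invariant)
          B C X u v D₀ hD₀ g₀ h₀ j₀ hj₀ (fun _ => rfl) (fun _ => rfl)
          D₁ hD₁ g₁ h₁ j₁ hj₁ (fun _ => rfl) (fun _ => rfl)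
      refine ⟨D, hD, g, h, ?_⟩
      ext x
      simp only [Set.mem_inter_iff, Set.mem_range, Set.mem_empty_iff_false, iff_false,
        not_and]
      rintro ⟨b, rfl⟩ ⟨c, hc⟩
      have huv : u b = v c := (hiff b c).1 hc.symm
      exact absurd huv (by simp [u, v])
  refine ⟨⟨?_, ?_, ?_⟩, sap⟩
  · -- Hereditary
    rintro M hM N hN
    obtain ⟨hfg, ⟨emb⟩⟩ := hN
    haveI : Finite N := hfg.finite
    exact ⟨hK₀.hereditary _ hM.1 ⟨Structure.FG.of_finite, ⟨redEmb₁ emb⟩⟩,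
           hK₁.hereditary _ hM.2 ⟨Structure.FG.of_finite, ⟨redEmb₂ emb⟩⟩⟩
  · -- JEP
    rintro B hB C hC
    obtain ⟨D, hD, g, h, -⟩ := sap.2 B C hB hC
    exact ⟨D, hD, ⟨g⟩, ⟨h⟩⟩
  · -- Amalgamation
    rintro M N P MN MP hM hN hP
    obtain ⟨Q, hQ, g, h, hcomm, -⟩ := sap.1 M N P hM hN hP MN MP
    exact ⟨Q, g, h, hQ, hcomm⟩

end NATPPaper
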